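/- (Conditional minimax theorem) Let $\mathcal{G}$ be a sub-$\sigma$-algebra, and let $K : X \times Y \to L^1(\mathcal{G})$ satisfy: (i) for each $x$, $\{K(x,y): y \in Y\}$ is downwards directed; (ii) for each $y$, $\{K(x,y): x \in X\}$ is upwards directed; (iii) the unconditional minimax equality $\sup_x \inf_y E[K(x,y)] = \inf_y \sup_x E[K(x,y)]$ holds, and this remains true when restricted to any set $A \in \mathcal{G}$ of positive measure (i.e., with $K$ replaced by $1_A K$); (iv) all relevant essential extrema are integrable. Then $\operatorname{esssup}_x \operatorname{essinf}_y K(x,y) = \operatorname{essinf}_y \operatorname{esssup}_x K(x,y)$ almost surely. -/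

import Mathlib

open MeasureTheory Filter
open scoped ENNReal Topology

private def zseq9 {ι : Type*} (x : ℕ → ι) (g : ι → ι → ι) : ℕ → ι
  | 0 => x 0
  | n + 1 => g (zseq9 x g n) (x (n + 1))

lemma aux_sup9 {Ω ι : Type*} [Nonempty ι]
    [MeasurableSpace Ω]
    {P : Measure Ω}
    (f : ι → Ω → ℝ)
    (hmeas : ∀ i, Measurable (f i))
    (hint : ∀ i, Integrable (f i) P)
    (hdir : ∀ i j, ∃ k, f k =ᵐ[P] fun ω => max (f i ω) (f j ω))
    (T : Ω → ℝ) (hTint : Integrable T P)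
    (hub : ∀ i, ∀ᵐ ω ∂P, f i ω ≤ T ω)
    (hlub : ∀ w : Ω → ℝ, Measurable w → (∀ i, ∀ᵐ ω ∂P, f i ω ≤ w ω) →
      ∀ᵐ ω ∂P, T ω ≤ w ω)
    (A : Set Ω) :
    ∫ ω in A, T ω ∂P ≤ ⨆ i, ∫ ω in A, f i ω ∂P := by
  have hm : ∀ i, Measurable (f i) := hmeas
  have hbddΩ : BddAbove (Set.range fun i => ∫ ω, f i ω ∂P) := by
    refine ⟨∫ ω, T ω ∂P, ?_⟩
    rintro _ ⟨i, rfl⟩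
    exact integral_mono_ae (hint i) hTint (hub i)
  set M := ⨆ i, ∫ ω, f i ω ∂P with hMdef
  have hxn : ∀ n : ℕ, ∃ i, M - 1 / (n + 1) < ∫ ω, f i ω ∂P := by
    intro n
    apply exists_lt_of_lt_ciSup
    have : (0:ℝ) < 1 / (n + 1) := by positivity
    exact sub_lt_self M this
  choose x hx using hxn
  choose g hg using hdir
  set z : ℕ → ι := zseq9 x g with hzdef
  have hz0 : z 0 = x 0 := rfl
  have hzs : ∀ n, z (n + 1) = g (z n) (x (n + 1)) := fun n => rfl
  have h1 : ∀ᵐ ω ∂P, ∀ n : ℕ, f (z (n + 1)) ω = max (f (z n) ω) (f (x (n + 1)) ω) :=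
    ae_all_iff.2 fun n => hg (z n) (x (n + 1))
  have h2 : ∀ᵐ ω ∂P, ∀ n : ℕ, f (z n) ω ≤ T ω := ae_all_iff.2 fun n => hub (z n)
  set w : Ω → ℝ := fun ω => ⨆ n, f (z n) ω with hwdef
  have hwmeas : Measurable w := Measurable.iSup (fun n => hmeas (z n))
  have hkey : ∀ᵐ ω ∂P, Monotone (fun n => f (z n) ω) ∧
      Tendsto (fun n => f (z n) ω) atTop (𝓝 (w ω)) ∧ w ω ≤ T ω ∧
      ∀ n, f (z n) ω ≤ w ω := by
    filter_upwards [h1, h2] with ω e1 e2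
    have mono : Monotone fun n => f (z n) ω := by
      apply monotone_nat_of_le_succ
      intro n
      rw [e1 n]
      exact le_max_left _ _
    have bdd : BddAbove (Set.range fun n => f (z n) ω) := by
      refine ⟨T ω, ?_⟩; rintro _ ⟨n, rfl⟩; exact e2 n
    exact ⟨mono, tendsto_atTop_ciSup mono bdd, ciSup_le e2, fun n => le_ciSup bdd n⟩
  have hgbound : Integrable (fun ω => |f (z 0) ω| + |T ω|) P := (hint (z 0)).abs.add hTint.abs
  have hwint : Integrable w P := by
    apply Integrable.mono' hgbound hwmeas.aestronglyMeasurable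
    filter_upwards [hkey] with ω h
    rw [Real.norm_eq_abs, abs_le]
    constructor
    · have := h.2.2.2 0
      have h0 : -(|f (z 0) ω| + |T ω|) ≤ f (z 0) ω := by
        have := abs_nonneg (T ω); have := neg_abs_le (f (z 0) ω); linarith
      linarith
    · have := h.2.2.1
      have : T ω ≤ |T ω| := le_abs_self _
      have := abs_nonneg (f (z 0) ω)
      linarith [h.2.2.1]
  have hdct : ∀ B : Set Ω, Tendsto (fun n => ∫ ω in B, f (z n) ω ∂P) atTop
      (𝓝 (∫ ω in B, w ω ∂P)) := by
    intro B
    apply tendsto_integral_of_dominated_convergence (fun ω => |f (z 0) ω| + |T ω|)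
    · exact fun n => ((hm (z n)).aestronglyMeasurable).restrict
    · exact hgbound.restrict
    · intro n
      apply ae_restrict_of_ae
      filter_upwards [hkey] with ω h
      rw [Real.norm_eq_abs, abs_le]
      have hlo : f (z 0) ω ≤ f (z n) ω := h.1 (Nat.zero_le n)
      have hhi : f (z n) ω ≤ T ω := (h.2.2.2 n).trans h.2.2.1
      constructor
      · have := neg_abs_le (f (z 0) ω); have := abs_nonneg (T ω); linarith
      · have := le_abs_self (T ω); have := abs_nonneg (f (z 0) ω); linarith
    · apply ae_restrict_of_ae
      filter_upwards [hkey] with ω h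
      exact h.2.1
  have hIzM : ∀ n, ∫ ω, f (z n) ω ∂P ≤ M := fun n => le_ciSup hbddΩ (z n)
  have hxz : ∀ n, M - 1 / (n + 1) < ∫ ω, f (z n) ω ∂P := by
    intro n
    cases n with
    | zero => simpa [hz0] using hx 0
    | succ n =>
      refine lt_of_lt_of_le (hx (n + 1)) (integral_mono_ae (hint _) (hint _) ?_)
      filter_upwards [hg (z n) (x (n + 1))] with ω h
      rw [hzs n, h]
      exact le_max_right _ _
  have hdctΩ : Tendsto (fun n => ∫ ω, f (z n) ω ∂P) atTop (𝓝 (∫ ω, w ω ∂P)) := by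
    simpa using hdct Set.univ
  have hM : ∫ ω, w ω ∂P = M := by
    refine tendsto_nhds_unique hdctΩ ?_
    apply tendsto_of_tendsto_of_tendsto_of_le_of_le
      (g := fun n : ℕ => M - 1 / (n + 1)) (h := fun _ : ℕ => M)
    · have : Tendsto (fun n : ℕ => 1 / ((n : ℝ) + 1)) atTop (𝓝 0) :=
        tendsto_one_div_add_atTop_nhds_zero_nat
      simpa using tendsto_const_nhds.sub this
    · exact tendsto_const_nhds
    · exact fun n => (hxz n).le
    · exact hIzM
  have hdom : ∀ i, ∀ᵐ ω ∂P, f i ω ≤ w ω := by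
    intro i
    have hmax_int : Integrable (fun ω => max (w ω) (f i ω)) P := hwint.sup (hint i)
    have htend2 : Tendsto (fun n => ∫ ω, max (f (z n) ω) (f i ω) ∂P) atTop
        (𝓝 (∫ ω, max (w ω) (f i ω) ∂P)) := by
      apply tendsto_integral_of_dominated_convergence (fun ω => |f (z 0) ω| + |T ω|)
      · exact fun n => ((hm (z n)).max (hm i)).aestronglyMeasurable
      · exact hgbound
      · intro n
        filter_upwards [hkey, hub i] with ω h hi
        rw [Real.norm_eq_abs, abs_le]
        have hlo : f (z 0) ω ≤ f (z n) ω := h.1 (Nat.zero_le n)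
        have hhi : f (z n) ω ≤ T ω := (h.2.2.2 n).trans h.2.2.1
        constructor
        · have h3 := neg_abs_le (f (z 0) ω)
          have h4 := abs_nonneg (T ω)
          have h5 : f (z n) ω ≤ max (f (z n) ω) (f i ω) := le_max_left _ _
          linarith
        · have h3 := le_abs_self (T ω)
          have h4 := abs_nonneg (f (z 0) ω)
          have h5 := max_le hhi hi
          linarith
      · filter_upwards [hkey] with ω h
        exact h.2.1.max tendsto_const_nhds
    have hle : ∫ ω, max (w ω) (f i ω) ∂P ≤ ∫ ω, w ω ∂P := by
      rw [hM]
      refine le_of_tendsto htend2 (Eventually.of_forall fun n => ?_)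
      have : ∫ ω, max (f (z n) ω) (f i ω) ∂P = ∫ ω, f (g (z n) i) ω ∂P :=
        (integral_congr_ae (hg (z n) i)).symm
      rw [this]
      exact le_ciSup hbddΩ _
    have hnn : 0 ≤ᵐ[P] fun ω => max (w ω) (f i ω) - w ω :=
      Eventually.of_forall fun ω => sub_nonneg.2 (le_max_left _ _)
    have hzero : ∫ ω, (max (w ω) (f i ω) - w ω) ∂P = 0 := by
      rw [integral_sub hmax_int hwint]
      have := integral_mono_ae hwint hmax_int
        (Eventually.of_forall fun ω => le_max_left (w ω) (f i ω))
      linarith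
    have heq := (integral_eq_zero_iff_of_nonneg_ae hnn (hmax_int.sub hwint)).1 hzero
    filter_upwards [heq] with ω h
    have h' : max (w ω) (f i ω) - w ω = 0 := h
    have : max (w ω) (f i ω) = w ω := by linarith
    calc f i ω ≤ max (w ω) (f i ω) := le_max_right _ _
      _ = w ω := this
  have hTw := hlub w hwmeas hdom
  have hweq : w =ᵐ[P] T := by
    filter_upwards [hkey, hTw] with ω h1 h2
    exact le_antisymm h1.2.2.1 h2
  have hbddA : BddAbove (Set.range fun i => ∫ ω in A, f i ω ∂P) := by
    refine ⟨∫ ω in A, T ω ∂P, ?_⟩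
    rintro _ ⟨i, rfl⟩
    exact integral_mono_ae ((hint i).restrict) (hTint.restrict) (ae_restrict_of_ae (hub i))
  calc ∫ ω in A, T ω ∂P = ∫ ω in A, w ω ∂P :=
        (integral_congr_ae (ae_restrict_of_ae hweq)).symm
    _ ≤ ⨆ i, ∫ ω in A, f i ω ∂P :=
        le_of_tendsto (hdct A) (Eventually.of_forall fun n => le_ciSup hbddA (z n))

set_option maxHeartbeats 2000000 in

/-- Conditional minimax inequality (hard direction via integration): for a map
`K : X × Y → L¹(𝒢)` with `{K(x,·)}` downwards directed and `{K(·,y)}` upwards directed,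
if moreover the unconditional minimax
equality holds on every positive-measure `𝒢`-set, then
`esssup_x essinf_y K = essinf_y esssup_x K` a.s.  Here `I x` is the essential infimum over
`y` of `K x y`, `S` the essential supremum over `x` of `I x`, `T y` the essential supremum
over `x` of `K x y`, and `J` the essential infimum over `y` of `T y`, each expressed through
its characterizing properties, and all of them integrable. -/
theorem stmt9 {Ω X Y : Type*} [Nonempty X] [Nonempty Y]
    [F : MeasurableSpace Ω] (G : MeasurableSpace Ω) (hG : G ≤ F)
    (P : Measure Ω) [IsProbabilityMeasure P]
    (K : X → Y → Ω → ℝ)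
    (hKmeas : ∀ x y, Measurable[G] (K x y))
    (hKint : ∀ x y, Integrable (K x y) P)
    (hdown : ∀ (x : X) (y₁ y₂ : Y), ∃ y, K x y =ᵐ[P] fun ω => min (K x y₁ ω) (K x y₂ ω))
    (hup : ∀ (y : Y) (x₁ x₂ : X), ∃ x, K x y =ᵐ[P] fun ω => max (K x₁ y ω) (K x₂ y ω))
    (I : X → Ω → ℝ) (hImeas : ∀ x, Measurable[G] (I x)) (hIint : ∀ x, Integrable (I x) P)
    (hI_lb : ∀ x y, ∀ᵐ ω ∂P, I x ω ≤ K x y ω)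
    (hI_glb : ∀ x (w : Ω → ℝ), Measurable[G] w →
      (∀ y, ∀ᵐ ω ∂P, w ω ≤ K x y ω) → ∀ᵐ ω ∂P, w ω ≤ I x ω)
    (S : Ω → ℝ) (hSmeas : Measurable[G] S) (hSint : Integrable S P)
    (hS_ub : ∀ x, ∀ᵐ ω ∂P, I x ω ≤ S ω)
    (hS_lub : ∀ w : Ω → ℝ, Measurable[G] w →
      (∀ x, ∀ᵐ ω ∂P, I x ω ≤ w ω) → ∀ᵐ ω ∂P, S ω ≤ w ω)
    (T : Y → Ω → ℝ) (hTmeas : ∀ y, Measurable[G] (T y)) (hTint : ∀ y, Integrable (T y) P)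
    (hT_ub : ∀ y x, ∀ᵐ ω ∂P, K x y ω ≤ T y ω)
    (hT_lub : ∀ y (w : Ω → ℝ), Measurable[G] w →
      (∀ x, ∀ᵐ ω ∂P, K x y ω ≤ w ω) → ∀ᵐ ω ∂P, T y ω ≤ w ω)
    (J : Ω → ℝ) (hJmeas : Measurable[G] J) (hJint : Integrable J P)
    (hJ_lb : ∀ y, ∀ᵐ ω ∂P, J ω ≤ T y ω)
    (hJ_glb : ∀ w : Ω → ℝ, Measurable[G] w →
      (∀ y, ∀ᵐ ω ∂P, w ω ≤ T y ω) → ∀ᵐ ω ∂P, w ω ≤ J ω)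
    -- the unconditional minimax equality holds on every positive-measure 𝒢-set
    (hminimax : ∀ A : Set Ω, MeasurableSet[G] A → 0 < P A →
      (⨆ x, ⨅ y, ∫ ω in A, K x y ω ∂P) = ⨅ y, ⨆ x, ∫ ω in A, K x y ω ∂P) :
    S =ᵐ[P] J := by
  -- easy direction: S ≤ J a.e.
  have hST : ∀ y, ∀ᵐ ω ∂P, S ω ≤ T y ω := by
    intro y
    refine hS_lub (T y) (hTmeas y) fun x => ?_
    filter_upwards [hI_lb x y, hT_ub y x] with ω a b
    exact a.trans b
  have hSJ : ∀ᵐ ω ∂P, S ω ≤ J ω := hJ_glb S hSmeas hST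
  -- the two one-sided integral estimates from the directedness lemma
  have hsup : ∀ (y) (A : Set Ω), ∫ ω in A, T y ω ∂P ≤ ⨆ x, ∫ ω in A, K x y ω ∂P :=
    fun y A => aux_sup9 (fun x => K x y) (fun x => hKmeas x y) (fun x => hKint x y)
      (hup y) (T y) (hTint y) (hT_ub y) (hT_lub y) A
  have hinf : ∀ (x) (A : Set Ω), (⨅ y, ∫ ω in A, K x y ω ∂P) ≤ ∫ ω in A, I x ω ∂P := by
    intro x A
    have hneg : ∫ ω in A, (fun ω => -(I x ω)) ω ∂P ≤
        ⨆ y, ∫ ω in A, (fun ω => -(K x y ω)) ω ∂P := by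
      refine aux_sup9 (fun y ω => -(K x y ω)) (fun y => (hKmeas x y).neg)
        (fun y => (hKint x y).neg) ?_ (fun ω => -(I x ω)) (hIint x).neg
        (fun y => ?_) (fun w hw hle => ?_) A
      · intro y₁ y₂
        obtain ⟨y, hy⟩ := hdown x y₁ y₂
        refine ⟨y, ?_⟩
        filter_upwards [hy] with ω h
        simp only [h]
        rcases le_total (K x y₁ ω) (K x y₂ ω) with hc | hc <;>
          simp [min_def, max_def, hc] <;> split_ifs <;> linarith
      · filter_upwards [hI_lb x y] with ω h
        linarith
      · have h' : ∀ y, ∀ᵐ ω ∂P, (fun ω => -(w ω)) ω ≤ K x y ω := by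
          intro y
          filter_upwards [hle y] with ω h
          simp only [neg_le] at h ⊢
          linarith
        filter_upwards [hI_glb x (fun ω => -(w ω)) hw.neg h'] with ω h
        simp only [neg_le] at h ⊢
        linarith
    -- convert the negated statement
    have hbble : BddBelow (Set.range fun y => ∫ ω in A, K x y ω ∂P) := by
      refine ⟨∫ ω in A, I x ω ∂P, ?_⟩
      rintro _ ⟨y, rfl⟩
      exact integral_mono_ae ((hIint x).restrict) ((hKint x y).restrict)
        (ae_restrict_of_ae (hI_lb x y))
    rw [le_iff_forall_pos_le_add]
    intro ε hε
    have h1 : -(∫ ω in A, I x ω ∂P) - ε < ⨆ y, ∫ ω in A, (fun ω => -(K x y ω)) ω ∂P := by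
      refine lt_of_lt_of_le ?_ hneg
      simp only [integral_neg]
      linarith
    obtain ⟨y, hy⟩ := exists_lt_of_lt_ciSup h1
    rw [integral_neg] at hy
    have h2 : ∫ ω in A, K x y ω ∂P < ∫ ω in A, I x ω ∂P + ε := by linarith
    exact (ciInf_le hbble y).trans h2.le
  -- key integral inequality on positive-measure G-sets
  have key : ∀ A : Set Ω, MeasurableSet[G] A → 0 < P A →
      ∫ ω in A, J ω ∂P ≤ ∫ ω in A, S ω ∂P := by
    intro A hAG hApos
    have hJA : ∫ ω in A, J ω ∂P ≤ ⨅ y, ⨆ x, ∫ ω in A, K x y ω ∂P := by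
      refine le_ciInf fun y => ?_
      refine le_trans ?_ (hsup y A)
      exact integral_mono_ae (hJint.restrict) ((hTint y).restrict)
        (ae_restrict_of_ae (hJ_lb y))
    have hSA : (⨆ x, ⨅ y, ∫ ω in A, K x y ω ∂P) ≤ ∫ ω in A, S ω ∂P := by
      refine ciSup_le fun x => ?_
      refine (hinf x A).trans ?_
      exact integral_mono_ae ((hIint x).restrict) (hSint.restrict)
        (ae_restrict_of_ae (hS_ub x))
    calc ∫ ω in A, J ω ∂P ≤ ⨅ y, ⨆ x, ∫ ω in A, K x y ω ∂P := hJA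
      _ = ⨆ x, ⨅ y, ∫ ω in A, K x y ω ∂P := (hminimax A hAG hApos).symm
      _ ≤ ∫ ω in A, S ω ∂P := hSA
  -- hard direction: J ≤ S a.e.
  have hJS : ∀ᵐ ω ∂P, J ω ≤ S ω := by
    by_contra hcon
    have hpos : 0 < P {ω | S ω < J ω} := by
      rw [ae_iff] at hcon
      have : {a | ¬J a ≤ S a} = {ω | S ω < J ω} := by ext ω; simp [not_le]
      rw [this] at hcon
      exact pos_iff_ne_zero.2 hcon
    have hcover : {ω | S ω < J ω} = ⋃ n : ℕ, {ω | S ω + 1 / (n + 1) ≤ J ω} := by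
      ext ω
      simp only [Set.mem_setOf_eq, Set.mem_iUnion]
      constructor
      · intro h
        obtain ⟨n, hn⟩ := exists_nat_one_div_lt (sub_pos.2 h)
        exact ⟨n, by push_cast at hn ⊢; linarith⟩
      · rintro ⟨n, hn⟩
        have : (0:ℝ) < 1 / (n + 1) := by positivity
        linarith
    have hex : ∃ n : ℕ, 0 < P {ω | S ω + 1 / (n + 1) ≤ J ω} := by
      by_contra hall
      push_neg at hall
      simp only [nonpos_iff_eq_zero] at hall
      have : P {ω | S ω < J ω} = 0 := by
        rw [hcover]
        exact measure_iUnion_null hall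
      exact absurd this hpos.ne'
    obtain ⟨n, hn⟩ := hex
    set c : ℝ := 1 / (n + 1) with hc
    have hcpos : (0:ℝ) < c := by positivity
    set A : Set Ω := {ω | S ω + c ≤ J ω} with hA
    have hAG : MeasurableSet[G] A :=
      measurableSet_le (hSmeas.add measurable_const) hJmeas
    have hkey := key A hAG hn
    have hlow : ∫ ω in A, S ω ∂P + c * (P A).toReal ≤ ∫ ω in A, J ω ∂P := by
      have h1 : ∫ ω in A, (S ω + c) ∂P ≤ ∫ ω in A, J ω ∂P := by
        refine integral_mono_ae (hSint.restrict.add (integrable_const c)) (hJint.restrict) ?_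
        refine (ae_restrict_iff' (μ := P) hAG).2 (Eventually.of_forall fun ω hω => hω)
      have h2 : ∫ ω in A, (S ω + c) ∂P = ∫ ω in A, S ω ∂P + c * (P A).toReal := by
        rw [integral_add (hSint.restrict) (integrable_const c), setIntegral_const]
        simp [mul_comm, measureReal_def]
      linarith
    have htoReal : 0 < (P A).toReal :=
      ENNReal.toReal_pos hn.ne' (measure_ne_top P A)
    nlinarith
  filter_upwards [hSJ, hJS] with ω h1 h2
  exact le_antisymm h1 h2
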